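/- (Well-definedness of the formal GSV-index.) Let f, P, Q ∈ ℂ[[x,y]] and suppose two decompositions g₁P = k₁∂ₓf + fη₁ₓ, g₁Q = k₁∂_yf + fη₁_y and g₂P = k₂∂ₓf + fη₂ₓ, g₂Q = k₂∂_yf + fη₂_y hold with g₁, g₂, k₁, k₂, η₁ₓ, η₁_y, η₂ₓ, η₂_y ∈ ℂ[[x,y]]. Let γ be a formal parametrization with f∘γ = 0 and (∂ₓf∘γ, ∂_yf∘γ) ≠ (0,0). Then (g₂k₁)∘γ = (g₁k₂)∘γ. In particular, if g₁∘γ, g₂∘γ, k₁∘γ, k₂∘γ are all nonzero, then ord_t(k₁∘γ) − ord_t(g₁∘γ) = ord_t(k₂∘γ) − ord_t(g₂∘γ), so the formal GSV-index ord_t((k/g)∘γ) does not depend on the chosen decomposition gω = k df + fη. -/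

import Mathlib

/-- Substitution `F(x(t), y(t))` of a two-variable formal power series `F ∈ ℂ[[x,y]]`
along a pair of one-variable formal power series (a formal parametrization `γ = (x, y)`;
this is the usual substitution when `x` and `y` have zero constant term, since then
`coeff n (x ^ i * y ^ j) = 0` whenever `i + j > n`). -/
noncomputable def pcomp (F : MvPowerSeries (Fin 2) ℂ) (x y : PowerSeries ℂ) : PowerSeries ℂ :=
  PowerSeries.mk fun n => ∑ p ∈ Finset.range (n + 1) ×ˢ Finset.range (n + 1),
    MvPowerSeries.coeff (Finsupp.single (0 : Fin 2) p.1 + Finsupp.single (1 : Fin 2) p.2) F *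
      PowerSeries.coeff n (x ^ p.1 * y ^ p.2)

/-- Formal partial derivative `∂F/∂xᵢ` of a two-variable formal power series. -/
noncomputable def pderiv2 (i : Fin 2) (F : MvPowerSeries (Fin 2) ℂ) : MvPowerSeries (Fin 2) ℂ :=
  fun d => ((d i : ℂ) + 1) * MvPowerSeries.coeff (d + Finsupp.single i 1) F

open Finset

noncomputable def DD (p q : ℕ) : Fin 2 →₀ ℕ := Finsupp.single 0 p + Finsupp.single 1 q

lemma DD_apply0 (p q : ℕ) : DD p q 0 = p := by simp [DD]
lemma DD_apply1 (p q : ℕ) : DD p q 1 = q := by simp [DD, Finsupp.single_apply]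

lemma DD_eq_self (u : Fin 2 →₀ ℕ) : DD (u 0) (u 1) = u := by
  ext i
  fin_cases i
  · simpa using DD_apply0 (u 0) (u 1)
  · simpa using DD_apply1 (u 0) (u 1)

lemma pcomp_def (F : MvPowerSeries (Fin 2) ℂ) (x y : PowerSeries ℂ) :
    pcomp F x y = PowerSeries.mk fun n => ∑ p ∈ Finset.range (n + 1) ×ˢ Finset.range (n + 1),
      MvPowerSeries.coeff (DD p.1 p.2) F * PowerSeries.coeff n (x ^ p.1 * y ^ p.2) := rfl

variable {x y : PowerSeries ℂ}

lemma order_pow_le (hx0 : PowerSeries.constantCoeff x = 0) (p : ℕ) :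
    (p : ℕ∞) ≤ (x ^ p).order := by
  have h1 : (1 : ℕ∞) ≤ x.order := by
    apply PowerSeries.nat_le_order
    intro i hi
    interval_cases i
    simpa using hx0
  induction p with
  | zero => simp
  | succ n ih =>
    rw [pow_succ]
    refine le_trans ?_ (PowerSeries.le_order_mul _ _)
    push_cast
    exact add_le_add ih h1

lemma coeff_xy_zero (hx0 : PowerSeries.constantCoeff x = 0)
    (hy0 : PowerSeries.constantCoeff y = 0) {p q n : ℕ} (h : n < p + q) :
    PowerSeries.coeff n (x ^ p * y ^ q) = 0 := by
  apply PowerSeries.coeff_of_lt_order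
  calc (n : ℕ∞) < (p : ℕ∞) + (q : ℕ∞) := by exact_mod_cast h
    _ ≤ (x ^ p).order + (y ^ q).order := add_le_add (order_pow_le hx0 p) (order_pow_le hy0 q)
    _ ≤ (x ^ p * y ^ q).order := PowerSeries.le_order_mul _ _

lemma pcomp_add (F G : MvPowerSeries (Fin 2) ℂ) :
    pcomp (F + G) x y = pcomp F x y + pcomp G x y := by
  ext n
  simp [pcomp, add_mul, Finset.sum_add_distrib]

lemma coeff_DD_mul (p q : ℕ) (F G : MvPowerSeries (Fin 2) ℂ) :
    MvPowerSeries.coeff (DD p q) (F * G) =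
      ∑ st ∈ Finset.HasAntidiagonal.antidiagonal p ×ˢ Finset.HasAntidiagonal.antidiagonal q,
        MvPowerSeries.coeff (DD st.1.1 st.2.1) F *
          MvPowerSeries.coeff (DD st.1.2 st.2.2) G := by
  rw [MvPowerSeries.coeff_mul]
  refine Finset.sum_nbij' (i := fun uv => ((uv.1 0, uv.2 0), (uv.1 1, uv.2 1)))
    (j := fun st => (DD st.1.1 st.2.1, DD st.1.2 st.2.2)) ?_ ?_ ?_ ?_ ?_
  · intro uv huv
    rw [Finset.HasAntidiagonal.mem_antidiagonal] at huv
    have h0 : uv.1 0 + uv.2 0 = p := by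
      have := congrArg (fun w => w 0) huv; simpa [DD_apply0] using this
    have h1 : uv.1 1 + uv.2 1 = q := by
      have := congrArg (fun w => w 1) huv; simpa [DD_apply1] using this
    simp [Finset.mem_product, Finset.HasAntidiagonal.mem_antidiagonal, h0, h1]
  · intro st hst
    simp only [Finset.mem_product, Finset.HasAntidiagonal.mem_antidiagonal] at hst
    rw [Finset.HasAntidiagonal.mem_antidiagonal]
    ext i
    fin_cases i
    · simpa [DD_apply0] using hst.1
    · simpa [DD_apply1] using hst.2
  · intro uv _; ext : 1 <;> simp [DD_eq_self]
  · intro st _; simp [DD_apply0, DD_apply1]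
  · intro uv _; rw [DD_eq_self, DD_eq_self]

lemma pcomp_mul (hx0 : PowerSeries.constantCoeff x = 0)
    (hy0 : PowerSeries.constantCoeff y = 0) (F G : MvPowerSeries (Fin 2) ℂ) :
    pcomp (F * G) x y = pcomp F x y * pcomp G x y := by
  ext n
  set S := Finset.range (n + 1) ×ˢ Finset.range (n + 1) with hS
  -- RHS: extend inner sums to range (n+1)
  have hext : ∀ (H : MvPowerSeries (Fin 2) ℂ) (a : ℕ), a ≤ n →
      PowerSeries.coeff a (pcomp H x y) =
        ∑ p ∈ S, MvPowerSeries.coeff (DD p.1 p.2) H * PowerSeries.coeff a (x ^ p.1 * y ^ p.2) := by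
    intro H a ha
    rw [pcomp_def, PowerSeries.coeff_mk]
    apply Finset.sum_subset
    · exact Finset.product_subset_product (Finset.range_subset_range.2 (by omega))
        (Finset.range_subset_range.2 (by omega))
    · intro p _ hp2
      simp only [hS, Finset.mem_product, Finset.mem_range] at hp2
      have : a < p.1 + p.2 := by omega
      rw [coeff_xy_zero hx0 hy0 this, mul_zero]
  have hRHS : PowerSeries.coeff n (pcomp F x y * pcomp G x y) =
      ∑ w ∈ S ×ˢ S, MvPowerSeries.coeff (DD w.1.1 w.1.2) F *
        MvPowerSeries.coeff (DD w.2.1 w.2.2) G *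
        PowerSeries.coeff n (x ^ (w.1.1 + w.2.1) * y ^ (w.1.2 + w.2.2)) := by
    rw [PowerSeries.coeff_mul]
    have h1 : ∀ ab ∈ Finset.HasAntidiagonal.antidiagonal n,
        PowerSeries.coeff ab.1 (pcomp F x y) * PowerSeries.coeff ab.2 (pcomp G x y)
          = ∑ w ∈ S ×ˢ S, (MvPowerSeries.coeff (DD w.1.1 w.1.2) F *
              PowerSeries.coeff ab.1 (x ^ w.1.1 * y ^ w.1.2)) *
              (MvPowerSeries.coeff (DD w.2.1 w.2.2) G *
              PowerSeries.coeff ab.2 (x ^ w.2.1 * y ^ w.2.2)) := by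
      intro ab hab
      rw [Finset.HasAntidiagonal.mem_antidiagonal] at hab
      rw [hext F ab.1 (by omega), hext G ab.2 (by omega), Finset.sum_mul_sum,
        ← Finset.sum_product']
    rw [Finset.sum_congr rfl h1, Finset.sum_comm]
    refine Finset.sum_congr rfl fun w _ => ?_
    have : ∀ ab ∈ Finset.HasAntidiagonal.antidiagonal n,
        (MvPowerSeries.coeff (DD w.1.1 w.1.2) F *
          PowerSeries.coeff ab.1 (x ^ w.1.1 * y ^ w.1.2)) *
        (MvPowerSeries.coeff (DD w.2.1 w.2.2) G *
          PowerSeries.coeff ab.2 (x ^ w.2.1 * y ^ w.2.2))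
        = (MvPowerSeries.coeff (DD w.1.1 w.1.2) F * MvPowerSeries.coeff (DD w.2.1 w.2.2) G) *
          (PowerSeries.coeff ab.1 (x ^ w.1.1 * y ^ w.1.2) *
           PowerSeries.coeff ab.2 (x ^ w.2.1 * y ^ w.2.2)) := fun ab _ => by ring
    rw [Finset.sum_congr rfl this, ← Finset.mul_sum, ← PowerSeries.coeff_mul]
    have : (x ^ w.1.1 * y ^ w.1.2) * (x ^ w.2.1 * y ^ w.2.2)
        = x ^ (w.1.1 + w.2.1) * y ^ (w.1.2 + w.2.2) := by ring
    rw [this, mul_assoc]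
  rw [hRHS, pcomp_def, PowerSeries.coeff_mk]
  -- LHS: expand coeff of product and reindex
  have hL : ∀ p ∈ S, MvPowerSeries.coeff (DD p.1 p.2) (F * G) *
      PowerSeries.coeff n (x ^ p.1 * y ^ p.2)
      = ∑ st ∈ Finset.HasAntidiagonal.antidiagonal p.1 ×ˢ Finset.HasAntidiagonal.antidiagonal p.2,
          MvPowerSeries.coeff (DD st.1.1 st.2.1) F *
          MvPowerSeries.coeff (DD st.1.2 st.2.2) G *
          PowerSeries.coeff n (x ^ p.1 * y ^ p.2) := fun p _ => by
    rw [coeff_DD_mul, Finset.sum_mul]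
  rw [Finset.sum_congr rfl hL, Finset.sum_sigma']
  -- restrict RHS to the filtered set
  rw [show (∑ w ∈ S ×ˢ S, MvPowerSeries.coeff (DD w.1.1 w.1.2) F *
        MvPowerSeries.coeff (DD w.2.1 w.2.2) G *
        PowerSeries.coeff n (x ^ (w.1.1 + w.2.1) * y ^ (w.1.2 + w.2.2)))
      = ∑ w ∈ (S ×ˢ S).filter (fun w => w.1.1 + w.2.1 ≤ n ∧ w.1.2 + w.2.2 ≤ n),
        MvPowerSeries.coeff (DD w.1.1 w.1.2) F *
        MvPowerSeries.coeff (DD w.2.1 w.2.2) G *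
        PowerSeries.coeff n (x ^ (w.1.1 + w.2.1) * y ^ (w.1.2 + w.2.2)) from
    (Finset.sum_subset (Finset.filter_subset _ _) (by
      intro w _ hw2
      simp only [Finset.mem_filter, Finset.mem_product] at hw2
      have : n < (w.1.1 + w.2.1) + (w.1.2 + w.2.2) := by
        by_contra hc
        push_neg at hc
        exact hw2 ⟨by simp [hS, Finset.mem_product, Finset.mem_range]; omega, by omega, by omega⟩
      rw [coeff_xy_zero hx0 hy0 this, mul_zero])).symm]
  refine Finset.sum_nbij' (i := fun z => ((z.2.1.1, z.2.2.1), (z.2.1.2, z.2.2.2)))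
    (j := fun w => ⟨(w.1.1 + w.2.1, w.1.2 + w.2.2), ((w.1.1, w.2.1), (w.1.2, w.2.2))⟩) ?_ ?_ ?_ ?_ ?_
  · intro z hz
    simp only [Finset.mem_sigma, hS, Finset.mem_product, Finset.mem_range,
      Finset.HasAntidiagonal.mem_antidiagonal] at hz
    simp only [Finset.mem_filter, hS, Finset.mem_product, Finset.mem_range]
    omega
  · intro w hw
    simp only [Finset.mem_filter, hS, Finset.mem_product, Finset.mem_range] at hw
    simp only [Finset.mem_sigma, hS, Finset.mem_product, Finset.mem_range,
      Finset.HasAntidiagonal.mem_antidiagonal]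
    exact ⟨⟨by omega, by omega⟩, trivial, trivial⟩
  · intro z hz
    simp only [Finset.mem_sigma, hS, Finset.mem_product, Finset.mem_range,
      Finset.HasAntidiagonal.mem_antidiagonal] at hz
    obtain ⟨⟨p, q⟩, ⟨⟨p1, p2⟩, ⟨q1, q2⟩⟩⟩ := z
    simp only at hz ⊢
    obtain ⟨_, hp, hq⟩ := hz
    subst hp hq
    rfl
  · intro w _; rfl
  · intro z hz
    simp only [Finset.mem_sigma, hS, Finset.mem_product, Finset.mem_range,
      Finset.HasAntidiagonal.mem_antidiagonal] at hz
    obtain ⟨⟨p, q⟩, ⟨⟨p1, p2⟩, ⟨q1, q2⟩⟩⟩ := z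
    simp only at hz ⊢
    obtain ⟨_, hp, hq⟩ := hz
    subst hp hq
    rfl

/-- **Well-definedness of the formal GSV-index.**
Given two decompositions `g₁ω = k₁df + fη₁` and `g₂ω = k₂df + fη₂` of `ω = P dx + Q dy`
(componentwise), and a formal parametrization `γ = (x, y)` with `f∘γ = 0` and
`(∂ₓf∘γ, ∂_yf∘γ) ≠ (0, 0)`, one has `(g₂k₁)∘γ = (g₁k₂)∘γ`; in particular, if
`g₁∘γ, g₂∘γ, k₁∘γ, k₂∘γ` are all nonzero, then
`ord_t(k₁∘γ) − ord_t(g₁∘γ) = ord_t(k₂∘γ) − ord_t(g₂∘γ)`, so the formal GSV-index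
does not depend on the chosen decomposition. -/
theorem stmt_6 (P Q f g₁ k₁ e₁x e₁y g₂ k₂ e₂x e₂y : MvPowerSeries (Fin 2) ℂ)
    (h1P : g₁ * P = k₁ * pderiv2 0 f + f * e₁x)
    (h1Q : g₁ * Q = k₁ * pderiv2 1 f + f * e₁y)
    (h2P : g₂ * P = k₂ * pderiv2 0 f + f * e₂x)
    (h2Q : g₂ * Q = k₂ * pderiv2 1 f + f * e₂y)
    (x y : PowerSeries ℂ)
    (hx0 : PowerSeries.constantCoeff x = 0) (hy0 : PowerSeries.constantCoeff y = 0)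
    (hf : pcomp f x y = 0)
    (hdf : ¬(pcomp (pderiv2 0 f) x y = 0 ∧ pcomp (pderiv2 1 f) x y = 0)) :
    pcomp (g₂ * k₁) x y = pcomp (g₁ * k₂) x y
    ∧ (pcomp g₁ x y ≠ 0 → pcomp g₂ x y ≠ 0 → pcomp k₁ x y ≠ 0 → pcomp k₂ x y ≠ 0 →
        ((pcomp k₁ x y).order.toNat : ℤ) - ((pcomp g₁ x y).order.toNat : ℤ)
          = ((pcomp k₂ x y).order.toNat : ℤ) - ((pcomp g₂ x y).order.toNat : ℤ)) := by
  have hxeq : g₂ * k₁ * pderiv2 0 f + f * (g₂ * e₁x)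
      = g₁ * k₂ * pderiv2 0 f + f * (g₁ * e₂x) := by
    linear_combination g₁ * h2P - g₂ * h1P
  have hyeq : g₂ * k₁ * pderiv2 1 f + f * (g₂ * e₁y)
      = g₁ * k₂ * pderiv2 1 f + f * (g₁ * e₂y) := by
    linear_combination g₁ * h2Q - g₂ * h1Q
  have c1 : pcomp (g₂ * k₁) x y * pcomp (pderiv2 0 f) x y
      = pcomp (g₁ * k₂) x y * pcomp (pderiv2 0 f) x y := by
    have := congrArg (fun H => pcomp H x y) hxeq
    simpa [pcomp_add, pcomp_mul hx0 hy0, hf] using this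
  have c2 : pcomp (g₂ * k₁) x y * pcomp (pderiv2 1 f) x y
      = pcomp (g₁ * k₂) x y * pcomp (pderiv2 1 f) x y := by
    have := congrArg (fun H => pcomp H x y) hyeq
    simpa [pcomp_add, pcomp_mul hx0 hy0, hf] using this
  have hAB : pcomp (g₂ * k₁) x y = pcomp (g₁ * k₂) x y := by
    rcases (show pcomp (pderiv2 0 f) x y ≠ 0 ∨ pcomp (pderiv2 1 f) x y ≠ 0 by tauto) with h | h
    · exact mul_right_cancel₀ h c1
    · exact mul_right_cancel₀ h c2
  refine ⟨hAB, fun hg1 hg2 hk1 hk2 => ?_⟩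
  have h2 : pcomp g₂ x y * pcomp k₁ x y = pcomp g₁ x y * pcomp k₂ x y := by
    rw [← pcomp_mul hx0 hy0, ← pcomp_mul hx0 hy0, hAB]
  have ho : (pcomp g₂ x y).order + (pcomp k₁ x y).order
      = (pcomp g₁ x y).order + (pcomp k₂ x y).order := by
    rw [← PowerSeries.order_mul, ← PowerSeries.order_mul, h2]
  have t1 : (pcomp g₁ x y).order ≠ ⊤ := by simpa [PowerSeries.order_eq_top] using hg1
  have t2 : (pcomp g₂ x y).order ≠ ⊤ := by simpa [PowerSeries.order_eq_top] using hg2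
  have tk1 : (pcomp k₁ x y).order ≠ ⊤ := by simpa [PowerSeries.order_eq_top] using hk1
  have tk2 : (pcomp k₂ x y).order ≠ ⊤ := by simpa [PowerSeries.order_eq_top] using hk2
  have := congrArg ENat.toNat ho
  rw [ENat.toNat_add t2 tk1, ENat.toNat_add t1 tk2] at this
  omega
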